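/- Every finite retract of a point-by-point retractable graph is point-by-point retractable: if B is a point-by-point retractable graph, r : B → B is a retraction, and the image A = r(B) is finite, then the induced subgraph A is point-by-point retractable. -/

import Mathlib

section PPRAux

lemma exists_cover' {B : Type*} {S : Set B} {A : ℕ → Set B} (hS : S.Finite)
    (hmono : ∀ n, A n ⊆ A (n+1)) (hsub : S ⊆ ⋃ n, A n) : ∃ N, S ⊆ A N := by
  have hA : Monotone A := monotone_nat_of_le_succ hmono
  refine Set.Finite.induction_on (motive := fun s _ => s ⊆ (⋃ n, A n) → ∃ N, s ⊆ A N) S hS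
    (fun _ => ⟨0, by simp⟩) ?_ hsub
  intro a s ha hsf ih hsub'
  obtain ⟨N1, hN1⟩ := ih (fun x hx => hsub' (Set.mem_insert_of_mem a hx))
  obtain ⟨N2, hN2⟩ := Set.mem_iUnion.mp (hsub' (Set.mem_insert a s))
  refine ⟨max N1 N2, ?_⟩
  rintro x (rfl | hx)
  · exact hA (le_max_right N1 N2) hN2
  · exact hA (le_max_left N1 N2) (hN1 hx)

open Classical in
lemma ppr_aux {B : Type*} (E : B → B → Prop)
    (hrefl : ∀ x, E x x) (hsymm : ∀ x y, E x y → E y x) :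
    ∀ (m : ℕ) (S : Set B) (hS : S.Finite), hS.toFinset.card ≤ m → S.Nonempty →
    ∀ (K : ℕ) (f : ℕ → B → B),
      (∀ j, ∀ x ∈ S, f j x ∈ S) →
      (∀ x ∈ S, f 0 x = x) →
      (∃ c, ∀ x ∈ S, f K x = c) →
      (∀ j < K, ∀ u ∈ S, ∀ v ∈ S, E u v →
        (E (f j u) (f (j+1) v) ∨ (f j u = f j v ∧ f (j+1) u = f (j+1) v))) →
      ∃ C : ℕ → Set B,
        (∃ x, C 0 = {x}) ∧ (∀ n, C n ⊆ C (n+1)) ∧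
        (∀ n, (C (n+1) \ C n).Subsingleton) ∧ (⋃ n, C n) = S ∧
        (∀ n, ∃ ρ : B → B, (∀ x ∈ C (n+1), ρ x ∈ C n) ∧ (∀ x ∈ C n, ρ x = x) ∧
          (∀ x ∈ C (n+1), ∀ y ∈ C (n+1), E x y → E (ρ x) (ρ y))) := by
  intro m
  induction m with
  | zero =>
    intro S hS hcard hne K f _ _ _ _
    exfalso
    obtain ⟨x, hx⟩ := hne
    have : x ∈ hS.toFinset := hS.mem_toFinset.mpr hx
    have := Finset.card_pos.mpr ⟨x, this⟩
    omega
  | succ m ih =>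
    intro S hS hcard hne K f h1 h2 h3 h4
    by_cases hid : ∃ i, i ≤ K ∧ ∃ x ∈ S, f i x ≠ x
    · -- find minimal such i
      have hex : ∃ i, i ≤ K ∧ ∃ x ∈ S, f i x ≠ x := hid
      have hspec := Nat.find_spec hex
      set i := Nat.find hex with hidef
      obtain ⟨hiK, u₀, hu₀S, hu₀⟩ := hspec
      have hipos : 0 < i := by
        rcases Nat.eq_zero_or_pos i with h | h
        · exfalso; rw [h] at hu₀; exact hu₀ (h2 u₀ hu₀S)
        · exact h
      have hprev : ∀ x ∈ S, f (i - 1) x = x := by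
        intro x hx
        by_contra hne'
        have hmin := Nat.find_min hex (m := i - 1) (by omega)
        push_neg at hmin
        exact hne' (hmin (by omega) x hx)
      -- the step relation at j = i - 1
      have hstep : ∀ u ∈ S, ∀ v ∈ S, E u v →
          (E u (f i v) ∨ (u = v ∧ f i u = f i v)) := by
        intro u hu v hv huv
        have h4' := h4 (i - 1) (by omega) u hu v hv huv
        rw [hprev u hu, hprev v hv] at h4'
        have : i - 1 + 1 = i := by omega
        rw [this] at h4'
        exact h4'
      set w := f i u₀ with hw
      have hwS : w ∈ S := h1 i u₀ hu₀S
      have hwne : w ≠ u₀ := fun h => hu₀ h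
      -- one-point retraction σ
      set σ : B → B := fun x => if x = u₀ then w else x with hσ
      have hσS : ∀ x ∈ S, σ x ∈ S \ {u₀} := by
        intro x hx
        by_cases h : x = u₀
        · simp only [hσ, h, if_pos rfl]
          exact ⟨hwS, hwne⟩
        · simp only [hσ, if_neg h]
          exact ⟨hx, h⟩
      have hσid : ∀ x ∈ S \ {u₀}, σ x = x := by
        intro x hx
        simp only [hσ, if_neg (show x ≠ u₀ from hx.2)]
      have hdom : ∀ z ∈ S, z ≠ u₀ → E z u₀ → E z w := by
        intro z hz hzne hzu
        rcases hstep z hz u₀ hu₀S hzu with h | ⟨h, _⟩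
        · exact h
        · exact absurd h hzne
      have hσhom : ∀ x ∈ S, ∀ y ∈ S, E x y → E (σ x) (σ y) := by
        intro x hx y hy hxy
        by_cases hxu : x = u₀ <;> by_cases hyu : y = u₀
        · subst hxu; subst hyu
          simp only [hσ, if_pos rfl]
          exact hrefl w
        · subst hxu
          simp only [hσ, if_pos rfl, if_neg hyu]
          exact hsymm _ _ (hdom y hy hyu (hsymm _ _ hxy))
        · subst hyu
          simp only [hσ, if_pos rfl, if_neg hxu]
          exact hdom x hx hxu hxy
        · simp only [hσ, if_neg hxu, if_neg hyu]
          exact hxy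
      -- recurse on S' = S \ {u₀}
      set S' : Set B := S \ {u₀} with hS'def
      have hS' : S'.Finite := hS.diff
      have hcard' : hS'.toFinset.card ≤ m := by
        have hsub : hS'.toFinset ⊆ hS.toFinset := by
          intro x hx
          rw [Set.Finite.mem_toFinset] at *
          exact hx.1
        have hmem : u₀ ∈ hS.toFinset := hS.mem_toFinset.mpr hu₀S
        have hnmem : u₀ ∉ hS'.toFinset := by
          rw [Set.Finite.mem_toFinset]
          exact fun h => h.2 rfl
        have := Finset.card_lt_card (Finset.ssubset_iff_of_subset hsub |>.mpr ⟨u₀, hmem, hnmem⟩)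
        omega
      have hne' : S'.Nonempty := ⟨w, hwS, hwne⟩
      obtain ⟨C', hC0', hmono', hsub', hun', hretr'⟩ :=
        ih S' hS' hcard' hne' K (fun j x => σ (f j x))
          (fun j x hx => hσS _ (h1 j x hx.1))
          (fun x hx => by show σ (f 0 x) = x; rw [h2 x hx.1]; exact hσid x hx)
          (by
            obtain ⟨c, hc⟩ := h3
            exact ⟨σ c, fun x hx => by show σ (f K x) = σ c; rw [hc x hx.1]⟩)
          (by
            intro j hj u hu v hv huv
            rcases h4 j hj u hu.1 v hv.1 huv with h | ⟨h, h'⟩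
            · exact Or.inl (hσhom _ (h1 j u hu.1) _ (h1 (j+1) v hv.1) h)
            · exact Or.inr ⟨by show σ (f j u) = σ (f j v); rw [h],
                by show σ (f (j+1) u) = σ (f (j+1) v); rw [h']⟩)
      -- find M with C' M = S'
      have hCsub : ∀ n, C' n ⊆ S' := by
        intro n x hx
        rw [← hun']
        exact Set.mem_iUnion.mpr ⟨n, hx⟩
      obtain ⟨M, hM⟩ := exists_cover' hS' hmono' (by rw [hun'])
      have hMeq : C' M = S' := Set.Subset.antisymm (hCsub M) hM
      -- extend the chain
      refine ⟨fun n => if n ≤ M then C' n else S, ?_, ?_, ?_, ?_, ?_⟩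
      · obtain ⟨x, hx⟩ := hC0'
        exact ⟨x, by simp [hx]⟩
      · intro n
        by_cases hn : n + 1 ≤ M
        · simp only [if_pos (by omega : n ≤ M), if_pos hn]
          exact hmono' n
        · by_cases hn' : n ≤ M
          · simp only [if_pos hn', if_neg hn]
            exact (hCsub n).trans Set.diff_subset
          · simp only [if_neg hn, if_neg hn']
            exact subset_rfl
      · intro n
        by_cases hn : n + 1 ≤ M
        · simp only [if_pos (by omega : n ≤ M), if_pos hn]
          exact hsub' n
        · by_cases hn' : n ≤ M
          · -- n = M, diff = S \ S' = {u₀}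
            have : n = M := by omega
            subst this
            simp only [if_pos hn', if_neg hn, hMeq]
            intro x hx y hy
            have hx' : x = u₀ := by
              by_contra h
              exact hx.2 ⟨hx.1, h⟩
            have hy' : y = u₀ := by
              by_contra h
              exact hy.2 ⟨hy.1, h⟩
            rw [hx', hy']
          · simp only [if_neg hn, if_neg hn']
            intro x hx
            exact absurd hx.1 hx.2
      · apply Set.Subset.antisymm
        · intro x hx
          obtain ⟨n, hn⟩ := Set.mem_iUnion.mp hx
          by_cases h : n ≤ M
          · simp only [if_pos h] at hn
            exact (hCsub n hn).1
          · simpa only [if_neg h] using hn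
        · intro x hx
          exact Set.mem_iUnion.mpr ⟨M + 1, by simp only [if_neg (by omega : ¬ M + 1 ≤ M)]; exact hx⟩
      · intro n
        by_cases hn : n + 1 ≤ M
        · obtain ⟨ρ, hρ1, hρ2, hρ3⟩ := hretr' n
          exact ⟨ρ, by simp only [if_pos (by omega : n ≤ M), if_pos hn]; exact hρ1,
            by simp only [if_pos (by omega : n ≤ M)]; exact hρ2,
            by simp only [if_pos hn]; exact hρ3⟩
        · by_cases hn' : n ≤ M
          · have : n = M := by omega
            subst this
            refine ⟨σ, ?_, ?_, ?_⟩
            · simp only [if_pos hn', if_neg hn, hMeq]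
              exact fun x hx => hσS x hx
            · simp only [if_pos hn', hMeq]
              exact hσid
            · simp only [if_neg hn]
              exact hσhom
          · refine ⟨id, ?_, fun x _ => rfl, ?_⟩
            · simp only [if_neg hn, if_neg hn']
              exact fun x hx => hx
            · exact fun x _ y _ h => h
    · -- all maps are identity on S up to K: S is a singleton
      push_neg at hid
      obtain ⟨c, hc⟩ := h3
      have hSc : S = {c} := by
        apply Set.Subset.antisymm
        · intro x hx
          have := hid K le_rfl x hx
          rw [← this, hc x hx]
          rfl
        · obtain ⟨x, hx⟩ := hne
          have : c ∈ S := by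
            have h := hid K le_rfl x hx
            rw [hc x hx] at h
            rwa [h]
          rintro y rfl
          exact this
      refine ⟨fun _ => {c}, ⟨c, rfl⟩, fun _ => subset_rfl, fun n => by simp, by simp [hSc], ?_⟩
      intro n
      exact ⟨id, fun x hx => hx, fun x _ => rfl, fun x _ y _ h => h⟩

end PPRAux


/-- A graph `(X, E)` is point-by-point retractable (PPR) if X = ⋃_n X_n for a
chain of induced subgraphs with |X_0| = 1, X_n ⊆ X_{n+1}, |X_{n+1} \ X_n| ≤ 1,
such that for each n there is a retraction of the induced subgraph X_{n+1}
onto X_n (a graph homomorphism X_{n+1} → X_n that is the identity on X_n). -/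
def PointByPointRetractable {X : Type*} (E : X → X → Prop) : Prop :=
  ∃ A : ℕ → Set X,
    (∃ x : X, A 0 = {x}) ∧
    (∀ n, A n ⊆ A (n + 1)) ∧
    (∀ n, (A (n + 1) \ A n).Subsingleton) ∧
    (⋃ n, A n) = Set.univ ∧
    ∀ n, ∃ r : X → X,
      (∀ x ∈ A (n + 1), r x ∈ A n) ∧
      (∀ x ∈ A n, r x = x) ∧
      (∀ x ∈ A (n + 1), ∀ y ∈ A (n + 1), E x y → E (r x) (r y))

/-- Every finite retract of a point-by-point retractable graph
is point-by-point retractable: if B is a PPR graph, r : B → B is a retraction,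
and the image A = r(B) is finite, then the induced subgraph on A is PPR. -/
theorem stmt_15 {B : Type*} (E : B → B → Prop)
    (hrefl : ∀ x, E x x) (hsymm : ∀ x y, E x y → E y x)
    (hPPR : PointByPointRetractable E)
    (r : B → B)
    (hhom : ∀ x y, E x y → E (r x) (r y))
    (hretr : ∀ x, r (r x) = r x)
    (hfin : (Set.range r).Finite) :
    PointByPointRetractable (fun a b : Set.range r => E a.1 b.1) := by
  classical
  obtain ⟨A, ⟨x₀, hA0⟩, hmono, hdiff, hunion, hr⟩ := hPPR
  choose s hs1 hs2 hs3 using hr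
  obtain ⟨N, hN⟩ := exists_cover' hfin hmono (by rw [hunion]; exact Set.subset_univ _)
  -- the descending chain of maps
  set c : ℕ → B → B := fun j x => Nat.rec x (fun k y => s (N - (k + 1)) y) j with hc
  have hc0 : ∀ x, c 0 x = x := fun x => rfl
  have hcsucc : ∀ j x, c (j + 1) x = s (N - (j + 1)) (c j x) := fun j x => rfl
  have hAmono : Monotone A := monotone_nat_of_le_succ hmono
  have hc_mem : ∀ j, ∀ x ∈ A N, c j x ∈ A (N - j) := by
    intro j
    induction j with
    | zero => intro x hx; rw [hc0]; simpa using hx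
    | succ j ihj =>
      intro x hx
      rw [hcsucc]
      exact hs1 (N - (j + 1)) _ (hAmono (by omega : N - j ≤ N - (j + 1) + 1) (ihj x hx))
  have hc_hom : ∀ j, ∀ x ∈ A N, ∀ y ∈ A N, E x y → E (c j x) (c j y) := by
    intro j
    induction j with
    | zero => intro x hx y hy hxy; rw [hc0, hc0]; exact hxy
    | succ j ihj =>
      intro x hx y hy hxy
      rw [hcsucc, hcsucc]
      exact hs3 (N - (j + 1)) _ (hAmono (by omega : N - j ≤ N - (j + 1) + 1) (hc_mem j x hx))
        _ (hAmono (by omega : N - j ≤ N - (j + 1) + 1) (hc_mem j y hy)) (ihj x hx y hy hxy)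
  -- the maps on S := range r
  set S : Set B := Set.range r with hSdef
  set f : ℕ → B → B := fun j x => r (c j x) with hf
  have hSA : S ⊆ A N := hN
  have h2 : ∀ x ∈ S, f 0 x = x := by
    rintro x ⟨y, rfl⟩
    show r (c 0 (r y)) = r y
    rw [hc0, hretr]
  have h3 : ∃ cc, ∀ x ∈ S, f N x = cc := by
    refine ⟨r x₀, fun x hx => ?_⟩
    have : c N x ∈ A 0 := by
      have := hc_mem N x (hSA hx)
      simpa using this
    rw [hA0] at this
    show r (c N x) = r x₀
    rw [this]
  have h4 : ∀ j < N, ∀ u ∈ S, ∀ v ∈ S, E u v →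
      (E (f j u) (f (j + 1) v) ∨ (f j u = f j v ∧ f (j + 1) u = f (j + 1) v)) := by
    intro j hj u hu v hv huv
    set n := N - (j + 1) with hn
    have hNj : N - j = n + 1 := by omega
    have ha : c j u ∈ A (n + 1) := by rw [← hNj]; exact hc_mem j u (hSA hu)
    have hb : c j v ∈ A (n + 1) := by rw [← hNj]; exact hc_mem j v (hSA hv)
    have hab : E (c j u) (c j v) := hc_hom j u (hSA hu) v (hSA hv) huv
    by_cases hbn : c j v ∈ A n
    · left
      show E (r (c j u)) (r (c (j + 1) v))
      rw [hcsucc, ← hn, hs2 n _ hbn]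
      exact hhom _ _ hab
    · by_cases han : c j u ∈ A n
      · left
        show E (r (c j u)) (r (c (j + 1) v))
        rw [hcsucc, ← hn]
        apply hhom
        have := hs3 n _ ha _ hb hab
        rwa [hs2 n _ han] at this
      · right
        have heq : c j u = c j v := hdiff n ⟨ha, han⟩ ⟨hb, hbn⟩
        constructor
        · show r (c j u) = r (c j v); rw [heq]
        · show r (c (j + 1) u) = r (c (j + 1) v); rw [hcsucc, hcsucc, heq]
  have h1 : ∀ j, ∀ x ∈ S, f j x ∈ S := fun j x _ => ⟨c j x, rfl⟩
  have hneS : S.Nonempty := ⟨r x₀, x₀, rfl⟩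
  obtain ⟨C, ⟨z, hz⟩, hCmono, hCdiff, hCun, hCretr⟩ :=
    ppr_aux E hrefl hsymm hfin.toFinset.card S hfin le_rfl hneS N f h1 h2 h3 h4
  have hCsub : ∀ n, C n ⊆ S := by
    intro n x hx
    rw [← hCun]
    exact Set.mem_iUnion.mpr ⟨n, hx⟩
  -- transfer to the subtype
  refine ⟨fun n => {a : S | (a : B) ∈ C n}, ?_, ?_, ?_, ?_, ?_⟩
  · have hzS : z ∈ S := hCsub 0 (by rw [hz]; rfl)
    refine ⟨⟨z, hzS⟩, ?_⟩
    ext a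
    simp only [Set.mem_setOf_eq, hz, Set.mem_singleton_iff]
    exact ⟨fun h => Subtype.ext h, fun h => by rw [h]⟩
  · exact fun n a ha => hCmono n ha
  · intro n a ha b hb
    exact Subtype.ext (hCdiff n ⟨ha.1, ha.2⟩ ⟨hb.1, hb.2⟩)
  · ext a
    simp only [Set.mem_iUnion, Set.mem_setOf_eq, Set.mem_univ, iff_true]
    exact Set.mem_iUnion.mp (hCun.ge a.2)
  · intro n
    obtain ⟨ρ, hρ1, hρ2, hρ3⟩ := hCretr n
    have hfix : ∀ x ∈ S, r x = x := by rintro x ⟨y, rfl⟩; exact hretr y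
    refine ⟨fun a => ⟨r (ρ (a : B)), Set.mem_range_self _⟩, ?_, ?_, ?_⟩
    · intro a ha
      simp only [Set.mem_setOf_eq] at ha
      show r (ρ (a : B)) ∈ C n
      rw [hfix _ (hCsub n (hρ1 _ ha))]
      exact hρ1 _ ha
    · intro a ha
      simp only [Set.mem_setOf_eq] at ha
      apply Subtype.ext
      show r (ρ (a : B)) = (a : B)
      rw [hρ2 _ ha]
      exact hfix _ (hCsub n ha)
    · intro a ha b hb hab
      simp only [Set.mem_setOf_eq] at ha hb
      show E (r (ρ (a : B))) (r (ρ (b : B)))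
      exact hhom _ _ (hρ3 _ ha _ hb hab)
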